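/- (Two-sided bound for the diluted series) Let (a_n) be nonincreasing and nonnegative and s(1) < s(2) < ... strictly increasing positive integers with counting function S. Then ∑_{k≥2} a_{s(k)} ≤ ∑_{n≥s(1)} a_n / Δs(S(n)) ≤ ∑_{k≥1} a_{s(k)}, where Δs(k) = s(k+1) − s(k), whenever the right-hand series converges (and the inequalities hold in the extended reals in general). -/

import Mathlib

open scoped ENNReal

theorem dilution_two_sided_bound
    (a : ℕ → ℝ≥0∞) (ha : ∀ n, a (n + 1) ≤ a n)
    (s : ℕ → ℕ) (hs : StrictMono s) (hs1 : ∀ k, 1 ≤ s k)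
    (S : ℕ → ℕ) (hS : ∀ n, S n = Set.ncard {k | 1 ≤ k ∧ s k ≤ n}) :
    (∑' k, a (s (k + 2)))
        ≤ ∑' n, a (n + s 1) / ((s (S (n + s 1) + 1) - s (S (n + s 1)) : ℕ) : ℝ≥0∞) ∧
    (∑' n, a (n + s 1) / ((s (S (n + s 1) + 1) - s (S (n + s 1)) : ℕ) : ℝ≥0∞))
        ≤ ∑' k, a (s (k + 1)) := by
  classical
  have ha' : Antitone a := antitone_nat_of_succ_le ha
  set d : ℕ → ℕ := fun k => s (k + 2) - s (k + 1) with hd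
  have hdpos : ∀ k, 0 < d k := fun k => Nat.sub_pos_of_lt (hs (by omega))
  -- value of S on the block [s (k+1), s (k+2))
  have hSblock : ∀ k m, s (k + 1) ≤ m → m < s (k + 2) → S m = k + 1 := by
    intro k m h1 h2
    rw [hS]
    have hset : {j | 1 ≤ j ∧ s j ≤ m} = (Finset.Icc 1 (k + 1) : Finset ℕ) := by
      ext j
      simp only [Set.mem_setOf_eq, Finset.coe_Icc, Set.mem_Icc]
      constructor
      · rintro ⟨hj1, hj2⟩
        refine ⟨hj1, ?_⟩
        by_contra hjk
        push_neg at hjk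
        have : s (k + 2) ≤ s j := hs.monotone (by omega)
        omega
      · rintro ⟨hj1, hj2⟩
        exact ⟨hj1, le_trans (hs.monotone hj2) h1⟩
    rw [hset, Set.ncard_coe_finset, Nat.card_Icc]
    omega
  -- every m ≥ s 1 lies in some block
  have hblock_ex : ∀ m, s 1 ≤ m → ∃ k, s (k + 1) ≤ m ∧ m < s (k + 2) := by
    intro m hm
    have hm1 : 1 ≤ m := le_trans (hs1 1) hm
    set P : ℕ → Prop := fun j => s j ≤ m with hP
    have h1 : 1 ≤ Nat.findGreatest P m := Nat.le_findGreatest hm1 hm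
    have hspec : P (Nat.findGreatest P m) :=
      Nat.findGreatest_spec (P := P) hm1 hm
    set j := Nat.findGreatest P m with hj
    have hsucc : m < s (j + 1) := by
      by_cases hcase : j + 1 ≤ m
      · have := Nat.findGreatest_is_greatest (P := P) (n := m) (by omega) hcase
        simpa [hP] using not_le.mp (by simpa [hP] using this)
      · have hjm : m ≤ j := by omega
        have : m < j + 1 := by omega
        calc m < j + 1 := this
          _ ≤ s (j + 1) := hs.le_apply
    exact ⟨j - 1, by
      constructor
      · have : j - 1 + 1 = j := by omega
        rw [this]; exact hspec
      · have : j - 1 + 2 = j + 1 := by omega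
        rw [this]; exact hsucc⟩
  set g : ℕ → ℝ≥0∞ := fun m =>
    if s 1 ≤ m then a m / ((s (S m + 1) - s (S m) : ℕ) : ℝ≥0∞) else 0 with hg
  -- the middle sum decomposes into blocks
  have key : (∑' n, a (n + s 1) / ((s (S (n + s 1) + 1) - s (S (n + s 1)) : ℕ) : ℝ≥0∞))
      = ∑' k, ∑ j ∈ Finset.range (d k), a (s (k + 1) + j) / (d k : ℝ≥0∞) := by
    have step1 : (∑' n, a (n + s 1) / ((s (S (n + s 1) + 1) - s (S (n + s 1)) : ℕ) : ℝ≥0∞))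
        = ∑' n, g (n + s 1) := by
      refine tsum_congr fun n => ?_
      rw [hg]
      simp only [if_pos (Nat.le_add_left (s 1) n)]
    have step2 : (∑' n, g (n + s 1)) = ∑' m, g m := by
      refine Function.Injective.tsum_eq (g := fun n => n + s 1)
        (add_left_injective (s 1)) ?_
      intro m hm
      have h1 : s 1 ≤ m := by
        by_contra h
        simp only [hg, Function.mem_support, if_neg h] at hm
        exact hm rfl
      exact ⟨m - s 1, by show m - s 1 + s 1 = m; omega⟩
    have step3 : (∑' m, g m)
        = ∑' p : Σ k : ℕ, Fin (d k), g (s (p.1 + 1) + (p.2 : ℕ)) := by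
      refine (Function.Injective.tsum_eq (g := fun p : Σ k : ℕ, Fin (d k) =>
        s (p.1 + 1) + (p.2 : ℕ)) ?_ ?_).symm
      · rintro ⟨k, j⟩ ⟨k', j'⟩ h
        simp only at h
        have hjk : s (k + 1) ≤ s (k + 1) + (j : ℕ) := Nat.le_add_right _ _
        have hjk2 : s (k + 1) + (j : ℕ) < s (k + 2) := by
          have := j.isLt
          have hdk : d k = s (k + 2) - s (k + 1) := rfl
          have : (j : ℕ) < s (k + 2) - s (k + 1) := j.isLt
          omega
        have hjk' : s (k' + 1) ≤ s (k' + 1) + (j' : ℕ) := Nat.le_add_right _ _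
        have hjk2' : s (k' + 1) + (j' : ℕ) < s (k' + 2) := by
          have : (j' : ℕ) < s (k' + 2) - s (k' + 1) := j'.isLt
          omega
        have hkk' : k = k' := by
          by_contra hne
          rcases Nat.lt_or_ge k k' with hlt | hge
          · have : s (k + 2) ≤ s (k' + 1) := hs.monotone (by omega)
            omega
          · have hlt : k' < k := by omega
            have : s (k' + 2) ≤ s (k + 1) := hs.monotone (by omega)
            omega
        subst hkk'
        have : (j : ℕ) = (j' : ℕ) := by omega
        exact Sigma.ext rfl (by simpa using Fin.ext this)
      · intro m hm
        have h1 : s 1 ≤ m := by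
          by_contra h
          simp only [hg, Function.mem_support, if_neg h] at hm
          exact hm rfl
        obtain ⟨k, hk1, hk2⟩ := hblock_ex m h1
        refine ⟨⟨k, ⟨m - s (k + 1), by
          have : m - s (k + 1) < s (k + 2) - s (k + 1) := by omega
          simpa [hd] using this⟩⟩, ?_⟩
        simp only
        omega
    have step4 : (∑' p : Σ k : ℕ, Fin (d k), g (s (p.1 + 1) + (p.2 : ℕ)))
        = ∑' k, ∑' j : Fin (d k), g (s (k + 1) + (j : ℕ)) :=
ENNReal.tsum_sigma' _
    have step5 : ∀ k, (∑' j : Fin (d k), g (s (k + 1) + (j : ℕ)))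
        = ∑ j ∈ Finset.range (d k), a (s (k + 1) + j) / (d k : ℝ≥0∞) := by
      intro k
      rw [tsum_fintype, ← Fin.sum_univ_eq_sum_range
        (fun j => a (s (k + 1) + j) / (d k : ℝ≥0∞))]
      refine Finset.sum_congr rfl fun j _ => ?_
      have hjlt : (j : ℕ) < s (k + 2) - s (k + 1) := j.isLt
      have hmem1 : s (k + 1) ≤ s (k + 1) + (j : ℕ) := Nat.le_add_right _ _
      have hmem2 : s (k + 1) + (j : ℕ) < s (k + 2) := by omega
      have hSm : S (s (k + 1) + (j : ℕ)) = k + 1 := hSblock k _ hmem1 hmem2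
      have h1 : s 1 ≤ s (k + 1) + (j : ℕ) :=
        le_trans (hs.monotone (by omega)) hmem1
      rw [hg]
      simp only [if_pos h1, hSm]
      rfl
    rw [step1, step2, step3, step4]
    exact tsum_congr step5
  have hdne : ∀ k, (d k : ℝ≥0∞) ≠ 0 := by
    intro k
    simp only [ne_eq, Nat.cast_eq_zero]
    exact (hdpos k).ne'
  have hdnt : ∀ k, (d k : ℝ≥0∞) ≠ ⊤ := fun k => ENNReal.natCast_ne_top _
  constructor
  · rw [key]
    refine ENNReal.tsum_le_tsum fun k => ?_
    calc a (s (k + 2)) = (d k : ℝ≥0∞) * (a (s (k + 2)) / (d k : ℝ≥0∞)) :=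
          (ENNReal.mul_div_cancel (hdne k) (hdnt k)).symm
      _ = ∑ _j ∈ Finset.range (d k), a (s (k + 2)) / (d k : ℝ≥0∞) := by
          rw [Finset.sum_const, Finset.card_range, nsmul_eq_mul]
      _ ≤ ∑ j ∈ Finset.range (d k), a (s (k + 1) + j) / (d k : ℝ≥0∞) := by
          refine Finset.sum_le_sum fun j hj => ?_
          have hjlt : j < d k := Finset.mem_range.mp hj
          have : s (k + 1) + j ≤ s (k + 2) := by
            have : j < s (k + 2) - s (k + 1) := hjlt
            omega
          exact ENNReal.div_le_div_right (ha' this) _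
  · rw [key]
    refine ENNReal.tsum_le_tsum fun k => ?_
    calc (∑ j ∈ Finset.range (d k), a (s (k + 1) + j) / (d k : ℝ≥0∞))
        ≤ ∑ _j ∈ Finset.range (d k), a (s (k + 1)) / (d k : ℝ≥0∞) := by
          refine Finset.sum_le_sum fun j hj => ?_
          exact ENNReal.div_le_div_right (ha' (Nat.le_add_right _ _)) _
      _ = (d k : ℝ≥0∞) * (a (s (k + 1)) / (d k : ℝ≥0∞)) := by
          rw [Finset.sum_const, Finset.card_range, nsmul_eq_mul]
      _ = a (s (k + 1)) := ENNReal.mul_div_cancel (hdne k) (hdnt k)
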